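/- Let O⁺(n) denote the *-algebra generated by self-adjoint elements x_{ij} (1 ≤ i,j ≤ n) with relations Σ_k x_{ki}x_{kj} = δ_{ij}·1 and Σ_k x_{ik}x_{jk} = δ_{ij}·1, with counit character ε(x_{ij}) = δ_{ij}. Then a linear functional η : O⁺(n) → ℂ satisfying η(ab) = η(a)ε(b) + ε(a)η(b) is determined by the matrix A = (η(x_{ij})), and A is necessarily antisymmetric: η(x_{ij}) = −η(x_{ji}); conversely every antisymmetric matrix A arises from a unique ε-derivation on the algebra. -/

import Mathlib

noncomputable section

/-- The orthogonality relations of the free orthogonal quantum group `O⁺(n)`: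
`Σ_k x_{ki}x_{kj} = δ_{ij}` and `Σ_k x_{ik}x_{jk} = δ_{ij}`. -/
inductive FreeOrthRel (n : ℕ) : FreeAlgebra ℂ (Fin n × Fin n) → FreeAlgebra ℂ (Fin n × Fin n) → Prop
  | col (i j : Fin n) : FreeOrthRel n
      (∑ k : Fin n, FreeAlgebra.ι ℂ ((k, i) : Fin n × Fin n) * FreeAlgebra.ι ℂ ((k, j) : Fin n × Fin n))
      (if i = j then 1 else 0)
  | row (i j : Fin n) : FreeOrthRel n
      (∑ k : Fin n, FreeAlgebra.ι ℂ ((i, k) : Fin n × Fin n) * FreeAlgebra.ι ℂ ((j, k) : Fin n × Fin n))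
      (if i = j then 1 else 0)

/-- The free orthogonal quantum group algebra `O⁺(n)`. -/
abbrev FreeOrth (n : ℕ) := RingQuot (FreeOrthRel n)

/-- The generator `x_{ij}` of `O⁺(n)`. -/
def freeOrthX {n : ℕ} (i j : Fin n) : FreeOrth n :=
  RingQuot.mkAlgHom ℂ (FreeOrthRel n) (FreeAlgebra.ι ℂ (i, j))

/-- On `O⁺(n)` with counit `ε(x_{ij}) = δ_{ij}`, every `ε`-derivation is determined by its
(necessarily antisymmetric) matrix of values on the generators, and conversely every
antisymmetric matrix arises from a unique `ε`-derivation. -/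
theorem freeOrth_eps_derivations_eq_antisymmetric_matrices
    (n : ℕ) (ε : FreeOrth n →ₐ[ℂ] ℂ)
    (hε : ∀ i j : Fin n, ε (freeOrthX i j) = if i = j then 1 else 0) :
    (∀ η : FreeOrth n →ₗ[ℂ] ℂ,
        (∀ a b : FreeOrth n, η (a * b) = η a * ε b + ε a * η b) →
        ∀ i j : Fin n, η (freeOrthX i j) = - η (freeOrthX j i)) ∧
    (∀ A : Matrix (Fin n) (Fin n) ℂ, A.transpose = -A →
        ∃! η : FreeOrth n →ₗ[ℂ] ℂ,
          (∀ a b : FreeOrth n, η (a * b) = η a * ε b + ε a * η b) ∧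
          ∀ i j : Fin n, η (freeOrthX i j) = A i j) := by
  classical
  -- every ε-derivation kills 1
  have hone : ∀ (η : FreeOrth n →ₗ[ℂ] ℂ),
      (∀ a b : FreeOrth n, η (a * b) = η a * ε b + ε a * η b) → η 1 = 0 := by
    intro η hη
    have h := hη 1 1
    have e1 : ε (1 : FreeOrth n) = 1 := map_one ε
    rw [mul_one, e1, mul_one, one_mul] at h
    exact (left_eq_add.mp h)
  constructor
  · -- antisymmetry
    intro η hη i j
    have hrel := RingQuot.mkAlgHom_rel ℂ (FreeOrthRel.col (n := n) i j)
    have h1 : η (RingQuot.mkAlgHom ℂ (FreeOrthRel n)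
        (∑ k : Fin n, FreeAlgebra.ι ℂ ((k, i) : Fin n × Fin n) *
          FreeAlgebra.ι ℂ ((k, j) : Fin n × Fin n))) =
        η (freeOrthX j i) + η (freeOrthX i j) := by
      rw [map_sum, map_sum]
      have hterm : ∀ k : Fin n,
          η (RingQuot.mkAlgHom ℂ (FreeOrthRel n)
            (FreeAlgebra.ι ℂ ((k, i) : Fin n × Fin n) * FreeAlgebra.ι ℂ ((k, j) : Fin n × Fin n)))
          = η (freeOrthX k i) * (if k = j then 1 else 0)
            + (if k = i then 1 else 0) * η (freeOrthX k j) := by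
        intro k
        rw [map_mul]
        rw [show (RingQuot.mkAlgHom ℂ (FreeOrthRel n)) (FreeAlgebra.ι ℂ ((k, i) : Fin n × Fin n))
              = freeOrthX k i from rfl,
            show (RingQuot.mkAlgHom ℂ (FreeOrthRel n)) (FreeAlgebra.ι ℂ ((k, j) : Fin n × Fin n))
              = freeOrthX k j from rfl,
            hη, hε, hε]
      simp only [hterm, mul_ite, ite_mul, mul_one, mul_zero, one_mul, zero_mul,
        Finset.sum_add_distrib, Finset.sum_ite_eq', Finset.mem_univ, if_true]
    have h2 : η (RingQuot.mkAlgHom ℂ (FreeOrthRel n)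
        ((if i = j then 1 else 0 : FreeAlgebra ℂ (Fin n × Fin n)))) = 0 := by
      split_ifs with h
      · rw [map_one, hone η hη]
      · rw [map_zero, map_zero]
    have h3 : η (freeOrthX j i) + η (freeOrthX i j) = 0 := h1.symm.trans (hrel ▸ h2)
    linear_combination h3
  · -- existence and uniqueness
    intro A hA
    have hAs : ∀ i j, A j i = - A i j := by
      intro i j
      have := congrFun (congrFun hA i) j
      simpa [Matrix.transpose_apply] using this
    -- lift to the dual numbers
    set f : FreeAlgebra ℂ (Fin n × Fin n) →ₐ[ℂ] TrivSqZeroExt ℂ ℂ :=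
      FreeAlgebra.lift ℂ (fun p => ((if p.1 = p.2 then 1 else 0 : ℂ), A p.1 p.2)) with hf_def
    have hfgen : ∀ p : Fin n × Fin n,
        f (FreeAlgebra.ι ℂ p) = ((if p.1 = p.2 then 1 else 0 : ℂ), A p.1 p.2) := by
      intro p; rw [hf_def]; exact FreeAlgebra.lift_ι_apply _ _
    have hsum1 : ∀ i j : Fin n,
        (∑ k : Fin n, (if k = i then (1 : ℂ) else 0) * (if k = j then 1 else 0))
          = if i = j then 1 else 0 := by
      intro i j
      simp only [ite_mul, one_mul, zero_mul, Finset.sum_ite_eq', Finset.mem_univ, if_true]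
    have hsum2 : ∀ i j : Fin n,
        (∑ k : Fin n, ((if k = i then (1 : ℂ) else 0) * A k j + (if k = j then (1 : ℂ) else 0) * A k i))
          = A i j + A j i := by
      intro i j
      rw [Finset.sum_add_distrib]
      congr 1
      · simp only [ite_mul, one_mul, zero_mul, Finset.sum_ite_eq', Finset.mem_univ, if_true]
      · simp only [ite_mul, one_mul, zero_mul, Finset.sum_ite_eq', Finset.mem_univ, if_true]
    have hsum1' : ∀ i j : Fin n,
        (∑ k : Fin n, (if i = k then (1 : ℂ) else 0) * (if j = k then 1 else 0))
          = if i = j then 1 else 0 := by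
      intro i j
      simp only [ite_mul, one_mul, zero_mul, Finset.sum_ite_eq, Finset.mem_univ, if_true]
      exact if_congr eq_comm rfl rfl
    have hsum2' : ∀ i j : Fin n,
        (∑ k : Fin n, ((if i = k then (1 : ℂ) else 0) * A j k + (if j = k then (1 : ℂ) else 0) * A i k))
          = A j i + A i j := by
      intro i j
      rw [Finset.sum_add_distrib]
      congr 1 <;>
        simp only [ite_mul, one_mul, zero_mul, Finset.sum_ite_eq, Finset.mem_univ, if_true]
    have hf : ∀ ⦃x y⦄, FreeOrthRel n x y → f x = f y := by
      rintro x y (⟨i, j⟩ | ⟨i, j⟩)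
      · rw [map_sum]
        refine TrivSqZeroExt.ext ?_ ?_
        · rw [TrivSqZeroExt.fst_sum]
          simp only [map_mul, hfgen, TrivSqZeroExt.fst_mul, TrivSqZeroExt.fst_mk, TrivSqZeroExt.snd_mk]
          change ∑ k, (if k = i then (1 : ℂ) else 0) * (if k = j then 1 else 0) = _
          rw [hsum1]
          split_ifs with hij <;> simp
        · rw [TrivSqZeroExt.snd_sum]
          simp only [map_mul, hfgen, TrivSqZeroExt.snd_mul, op_smul_eq_smul, smul_eq_mul,
            TrivSqZeroExt.fst_mk, TrivSqZeroExt.snd_mk]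
          change ∑ k, ((if k = i then (1 : ℂ) else 0) * A k j + A k i * (if k = j then (1 : ℂ) else 0)) = _
          simp only [mul_comm (A _ _)]
          rw [hsum2, hAs]
          split_ifs with hij <;> simp
      · rw [map_sum]
        refine TrivSqZeroExt.ext ?_ ?_
        · rw [TrivSqZeroExt.fst_sum]
          simp only [map_mul, hfgen, TrivSqZeroExt.fst_mul, TrivSqZeroExt.fst_mk, TrivSqZeroExt.snd_mk]
          change ∑ k, (if i = k then (1 : ℂ) else 0) * (if j = k then 1 else 0) = _
          rw [hsum1']
          split_ifs with hij <;> simp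
        · rw [TrivSqZeroExt.snd_sum]
          simp only [map_mul, hfgen, TrivSqZeroExt.snd_mul, op_smul_eq_smul, smul_eq_mul,
            TrivSqZeroExt.fst_mk, TrivSqZeroExt.snd_mk]
          change ∑ k, ((if i = k then (1 : ℂ) else 0) * A j k + A i k * (if j = k then (1 : ℂ) else 0)) = _
          simp only [mul_comm (A _ _)]
          rw [hsum2', hAs]
          split_ifs with hij <;> simp
    set Φ : FreeOrth n →ₐ[ℂ] TrivSqZeroExt ℂ ℂ := RingQuot.liftAlgHom ℂ ⟨f, hf⟩ with hΦ_def
    have hΦgen : ∀ i j : Fin n, Φ (freeOrthX i j) = ((if i = j then 1 else 0 : ℂ), A i j) := by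
      intro i j
      rw [hΦ_def, freeOrthX, RingQuot.liftAlgHom_mkAlgHom_apply, hfgen]
    have hεcomp : (TrivSqZeroExt.fstHom ℂ ℂ ℂ).comp Φ = ε := by
      apply RingQuot.ringQuot_ext'
      apply FreeAlgebra.hom_ext
      funext p
      show (TrivSqZeroExt.fstHom ℂ ℂ ℂ) (Φ (freeOrthX p.1 p.2)) = ε (freeOrthX p.1 p.2)
      rw [hΦgen, hε]
      rfl
    have hfst : ∀ a : FreeOrth n, (Φ a).fst = ε a := fun a => DFunLike.congr_fun hεcomp a
    set η : FreeOrth n →ₗ[ℂ] ℂ := (TrivSqZeroExt.sndHom ℂ ℂ) ∘ₗ Φ.toLinearMap with hη_def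
    have hηsnd : ∀ a : FreeOrth n, η a = (Φ a).snd := fun a => rfl
    have hηder : ∀ a b : FreeOrth n, η (a * b) = η a * ε b + ε a * η b := by
      intro a b
      rw [hηsnd, hηsnd, hηsnd, map_mul, TrivSqZeroExt.snd_mul, hfst, hfst]
      simp only [op_smul_eq_smul, smul_eq_mul]
      ring
    have hηgen : ∀ i j : Fin n, η (freeOrthX i j) = A i j := by
      intro i j; rw [hηsnd, hΦgen, TrivSqZeroExt.snd_mk]
    refine ⟨η, ⟨hηder, hηgen⟩, ?_⟩
    rintro η' ⟨hη'der, hη'gen⟩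
    -- uniqueness
    apply LinearMap.ext
    intro a
    obtain ⟨x, rfl⟩ := RingQuot.mkAlgHom_surjective ℂ (FreeOrthRel n) a
    induction x using FreeAlgebra.induction with
    | grade0 r =>
        rw [AlgHom.commutes (RingQuot.mkAlgHom ℂ (FreeOrthRel n)) r]
        rw [show (algebraMap ℂ (FreeOrth n)) r = r • (1 : FreeOrth n) from
          Algebra.algebraMap_eq_smul_one r]
        rw [map_smul, map_smul, hone η hηder, hone η' hη'der]
    | grade1 p =>
        have h1 : (RingQuot.mkAlgHom ℂ (FreeOrthRel n)) (FreeAlgebra.ι ℂ p)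
            = freeOrthX p.1 p.2 := rfl
        rw [h1, hηgen, hη'gen]
    | mul x y hx hy =>
        rw [map_mul, hηder, hη'der, hx, hy]
    | add x y hx hy =>
        rw [map_add, map_add, map_add, hx, hy]
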